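/- With Y multiplication by x, Z the formal derivative on ℂ[x], H = Y∘Z, G = R(H)∘Z for a fixed polynomial R of degree d, q ∈ ℂ[X] with q(0) = 0 and deg q = l ≥ 1, and P_n^q = e^{q(G)}(x^n) (with the convention P_m^q = 0 for m < 0): the polynomials P_n^q satisfy a finite-term recurrence relation; that is, for every n ∈ ℕ there exist complex constants γ_0(n), …, γ_{ld+l−1}(n), independent of x, such that x·P_n^q = P_{n+1}^q + Σ_{j=0}^{ld+l−1} γ_j(n)·P_{n−j}^q. -/

import Mathlib

open Polynomial Finset

noncomputable section

/-- `E` is the ℂ-algebra of ℂ-linear endomorphisms of `ℂ[x]`. -/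
abbrev E := Module.End ℂ (Polynomial ℂ)

/-- `Y`: multiplication by `x`. -/
def Yop : E := LinearMap.mulLeft ℂ (X : Polynomial ℂ)

/-- `Z`: the formal derivative. -/
def Zop : E := Polynomial.derivative

/-- `H = Y ∘ Z`. -/
def Hop : E := Yop * Zop

/-- `G = R(H) ∘ Z`. -/
def Gop (R : Polynomial ℂ) : E := aeval Hop R * Zop

-- extensionality on monomials
lemma Eext {f g : E} (h : ∀ n : ℕ, f (X ^ n) = g (X ^ n)) : f = g := by
  apply Polynomial.lhom_ext'
  intro n
  apply LinearMap.ext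
  intro c
  have hm : (monomial n c : Polynomial ℂ) = c • X ^ n := by
    rw [smul_eq_C_mul, C_mul_X_pow_eq_monomial]
  simp only [LinearMap.comp_apply, hm, map_smul, h n]

lemma Yop_apply (p : Polynomial ℂ) : Yop p = X * p := rfl

lemma Hop_monomial (m : ℕ) : Hop (X ^ m : Polynomial ℂ) = (m : ℂ) • X ^ m := by
  show Yop (Zop (X ^ m)) = _
  rw [Zop, Yop]
  show (X : Polynomial ℂ) * derivative (X ^ m) = _
  rw [derivative_X_pow]
  cases m with
  | zero => simp
  | succ k =>
    rw [Nat.add_sub_cancel, smul_eq_C_mul]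
    push_cast
    ring
lemma Hpow_monomial (i m : ℕ) : (Hop ^ i) (X ^ m : Polynomial ℂ) = ((m : ℂ) ^ i) • X ^ m := by
  induction i with
  | zero => simp
  | succ k ih =>
    rw [pow_succ, Module.End.mul_apply, Hop_monomial, map_smul, ih, smul_smul, pow_succ]
    ring_nf

lemma aevalH_monomial (f : Polynomial ℂ) (m : ℕ) :
    (aeval Hop f) (X ^ m : Polynomial ℂ) = f.eval (m : ℂ) • X ^ m := by
  rw [aeval_eq_sum_range (R := ℂ) Hop, eval_eq_sum_range]
  simp only [LinearMap.sum_apply, LinearMap.smul_apply, Hpow_monomial, smul_smul,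
    ← Finset.sum_smul]

def gc (R : Polynomial ℂ) (m : ℕ) : ℂ := (m : ℂ) * R.eval ((m : ℂ) - 1)

lemma gc_zero (R : Polynomial ℂ) : gc R 0 = 0 := by simp [gc]

lemma Gop_monomial (R : Polynomial ℂ) (m : ℕ) :
    Gop R (X ^ m : Polynomial ℂ) = gc R m • X ^ (m - 1) := by
  show (aeval Hop R) (Zop (X ^ m)) = _
  rw [Zop]
  show (aeval Hop R) (derivative (X ^ m)) = _
  rw [derivative_X_pow]
  cases m with
  | zero => simp [gc]
  | succ k =>
    rw [Nat.add_sub_cancel, ← smul_eq_C_mul, map_smul, aevalH_monomial, gc]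
    push_cast
    rw [smul_smul]
    ring_nf

lemma Gpow_monomial (R : Polynomial ℂ) (k m : ℕ) :
    ((Gop R) ^ k) (X ^ m : Polynomial ℂ)
      = (∏ i ∈ range k, gc R (m - i)) • X ^ (m - k) := by
  induction k with
  | zero => simp
  | succ k ih =>
    rw [pow_succ', Module.End.mul_apply, ih, map_smul, Gop_monomial, smul_smul,
      prod_range_succ, Nat.sub_sub]

lemma Gpow_monomial_zero (R : Polynomial ℂ) {k m : ℕ} (h : m < k) :
    ((Gop R) ^ k) (X ^ m : Polynomial ℂ) = 0 := by
  rw [Gpow_monomial, prod_eq_zero (Finset.mem_range.2 h)]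
  · simp
  · simp [gc]
lemma natDegree_comp_sub {f : Polynomial ℂ} {a : ℂ} {e : ℕ} (hf : f.natDegree ≤ e)
    (he : 1 ≤ e) : (f.comp (X + C a) - f).natDegree ≤ e - 1 := by
  by_cases h0 : f.comp (X + C a) - f = 0
  · simp [h0]
  rw [← Nat.lt_iff_le_pred he]
  rw [Polynomial.natDegree_lt_iff_degree_lt h0]
  rw [Polynomial.degree_lt_iff_coeff_zero]
  intro j hj
  rw [coeff_sub]
  have hfj : f.natDegree ≤ j := le_trans hf (by exact_mod_cast hj)
  rcases eq_or_lt_of_le hfj with heq | hlt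
  · rw [← heq]
    have h1 : (X + C a : Polynomial ℂ).natDegree = 1 := natDegree_X_add_C a
    have := Polynomial.coeff_comp_degree_mul_degree (p := f) (q := X + C a) (by rw [h1]; norm_num)
    rw [h1, mul_one] at this
    rw [this, leadingCoeff, (monic_X_add_C a).leadingCoeff]
    simp
  · rw [coeff_eq_zero_of_natDegree_lt hlt, coeff_eq_zero_of_natDegree_lt, sub_zero]
    calc (f.comp (X + C a)).natDegree ≤ f.natDegree * (X + C a).natDegree :=
          natDegree_comp_le
      _ ≤ f.natDegree * 1 := by rw [natDegree_X_add_C]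
      _ < j := by rw [mul_one]; exact hlt

lemma G_comm_aevalH (R f : Polynomial ℂ) :
    Gop R * aeval Hop f = aeval Hop (f.comp (X + C 1)) * Gop R := by
  apply Eext; intro m
  rw [Module.End.mul_apply, Module.End.mul_apply, aevalH_monomial, map_smul, Gop_monomial,
      map_smul, aevalH_monomial, smul_smul, smul_smul]
  cases m with
  | zero => simp [gc]
  | succ k =>
    congr 1
    rw [Nat.add_sub_cancel, eval_comp]
    push_cast
    simp only [eval_add, eval_X, eval_C]
    ring

lemma Gpow_comm_aevalH (R f : Polynomial ℂ) (k : ℕ) :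
    (Gop R) ^ k * aeval Hop f = aeval Hop (f.comp (X + C (k : ℂ))) * (Gop R) ^ k := by
  induction k with
  | zero => simp
  | succ k ih =>
    rw [pow_succ', mul_assoc, ih, ← mul_assoc, G_comm_aevalH, mul_assoc, ← pow_succ']
    congr 2
    rw [comp_assoc]
    congr 1
    simp only [add_comp, X_comp, C_comp]
    rw [add_assoc, ← C_add]
    push_cast
    ring_nf

def Spoly (R : Polynomial ℂ) : Polynomial ℂ := R * (X + 1) - R.comp (X - C 1) * X

lemma G_comm_Y (R : Polynomial ℂ) :
    Gop R * Yop = Yop * Gop R + aeval Hop (Spoly R) := by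
  apply Eext; intro m
  rw [Module.End.mul_apply, Yop_apply, ← pow_succ', Gop_monomial, Nat.add_sub_cancel,
      LinearMap.add_apply, Module.End.mul_apply, Gop_monomial, map_smul, Yop_apply,
      aevalH_monomial]
  cases m with
  | zero =>
    simp [gc, Spoly, eval_comp]
  | succ k =>
    rw [Nat.add_sub_cancel, ← pow_succ', ← add_smul]
    congr 1
    simp only [gc, Spoly, eval_sub, eval_mul, eval_add, eval_X, eval_one, eval_comp, eval_C]
    push_cast
    ring

lemma natDegree_Spoly (R : Polynomial ℂ) : (Spoly R).natDegree ≤ R.natDegree := by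
  have hrw : Spoly R = R + (R.comp (X + C (-1)) - R) * (-X) := by
    rw [Spoly]
    have : (X - C 1 : Polynomial ℂ) = X + C (-1) := by
      rw [C_neg, ← sub_eq_add_neg]
    rw [this]
    ring
  rw [hrw]
  apply le_trans (natDegree_add_le _ _)
  rw [max_le_iff]
  refine ⟨le_refl _, ?_⟩
  rcases Nat.eq_zero_or_pos R.natDegree with h0 | hpos
  · obtain ⟨c, hc⟩ := Polynomial.natDegree_eq_zero.mp h0
    rw [← hc]
    simp
  · apply le_trans (natDegree_mul_le)
    have h1 := natDegree_comp_sub (a := -1) (le_refl R.natDegree) hpos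
    have h2 : (-X : Polynomial ℂ).natDegree = 1 := by simp
    omega
def Tpoly (R : Polynomial ℂ) (m : ℕ) : Polynomial ℂ :=
  ∑ i ∈ range m, (Spoly R).comp (X + C (i : ℂ))

lemma natDegree_Tpoly (R : Polynomial ℂ) (m : ℕ) : (Tpoly R m).natDegree ≤ R.natDegree := by
  apply natDegree_sum_le_of_forall_le
  intro i _
  calc ((Spoly R).comp (X + C (i:ℂ))).natDegree
      ≤ (Spoly R).natDegree * (X + C (i:ℂ)).natDegree := natDegree_comp_le
    _ ≤ R.natDegree := by rw [natDegree_X_add_C, mul_one]; exact natDegree_Spoly R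

lemma Tpoly_succ (R : Polynomial ℂ) (m : ℕ) :
    Tpoly R (m + 1) = Spoly R + (Tpoly R m).comp (X + C 1) := by
  rw [Tpoly, Tpoly, Finset.sum_range_succ', Polynomial.sum_comp, add_comm]
  congr 1
  · simp
  · apply Finset.sum_congr rfl
    intro i _
    rw [comp_assoc]
    congr 1
    simp only [add_comp, X_comp, C_comp]
    rw [add_assoc, ← C_add]
    push_cast
    ring_nf

lemma Gpow_comm_Y (R : Polynomial ℂ) (m : ℕ) :
    (Gop R) ^ (m + 1) * Yop
      = Yop * (Gop R) ^ (m + 1) + aeval Hop (Tpoly R (m + 1)) * (Gop R) ^ m := by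
  induction m with
  | zero =>
    rw [pow_one, pow_zero, mul_one, G_comm_Y]
    congr 2
    rw [Tpoly, sum_range_one]
    simp
  | succ m ih =>
    have step : (Gop R) ^ (m + 2) * Yop = Gop R * ((Gop R) ^ (m + 1) * Yop) := by
      rw [← mul_assoc, ← pow_succ']
    rw [step, ih, mul_add, ← mul_assoc, ← mul_assoc, G_comm_aevalH, G_comm_Y, add_mul,
      mul_assoc Yop, ← pow_succ', mul_assoc _ (Gop R), ← pow_succ']
    rw [add_assoc, ← add_mul]
    congr 2
    rw [← map_add]
    congr 1
    exact (Tpoly_succ R (m + 1)).symm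

def Mspan (R : Polynomial ℂ) (e s t : ℕ) : Submodule ℂ E :=
  Submodule.span ℂ
    {T : E | ∃ f : Polynomial ℂ, ∃ k : ℕ,
      f.natDegree ≤ e ∧ s ≤ k ∧ k < t ∧ T = aeval Hop f * (Gop R) ^ k}

lemma Bone_mem (R q : Polynomial ℂ) {l : ℕ} (hql : q.natDegree = l) (hl : 1 ≤ l) :
    Yop * aeval (Gop R) q - aeval (Gop R) q * Yop ∈ Mspan R R.natDegree 0 l := by
  rw [aeval_eq_sum_range' (n := l + 1) (by omega) (Gop R)]
  rw [Finset.mul_sum, Finset.sum_mul, ← Finset.sum_sub_distrib]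
  apply sum_mem
  intro m hm
  rw [mul_smul_comm, smul_mul_assoc, ← smul_sub]
  apply Submodule.smul_mem
  cases m with
  | zero => simp
  | succ m' =>
    have h2 : Yop * (Gop R) ^ (m' + 1) - (Gop R) ^ (m' + 1) * Yop
        = -(aeval Hop (Tpoly R (m' + 1)) * (Gop R) ^ m') := by
      rw [Gpow_comm_Y]; abel
    rw [h2]
    apply Submodule.neg_mem
    apply Submodule.subset_span
    exact ⟨Tpoly R (m' + 1), m', natDegree_Tpoly R _, Nat.zero_le _,
      by simpa using Nat.lt_of_succ_lt_succ (Finset.mem_range.mp hm), rfl⟩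

lemma Mspan_comm_step (R q : Polynomial ℂ) (hq0 : q.coeff 0 = 0) {l e s t : ℕ}
    (hql : q.natDegree = l) (he : 1 ≤ e) {T : E} (hT : T ∈ Mspan R e s t) :
    T * aeval (Gop R) q - aeval (Gop R) q * T ∈ Mspan R (e - 1) (s + 1) (t + l) := by
  induction hT using Submodule.span_induction with
  | mem x hx =>
    obtain ⟨f, k, hfe, hsk, hkt, rfl⟩ := hx
    rw [aeval_eq_sum_range' (n := l + 1) (by omega) (Gop R)]
    rw [Finset.mul_sum, Finset.sum_mul, ← Finset.sum_sub_distrib]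
    apply sum_mem
    intro m hm
    rw [mul_smul_comm, smul_mul_assoc, ← smul_sub]
    apply Submodule.smul_mem
    cases m with
    | zero => simp
    | succ m' =>
      have key : aeval Hop f * (Gop R) ^ k * (Gop R) ^ (m' + 1)
          - (Gop R) ^ (m' + 1) * (aeval Hop f * (Gop R) ^ k)
          = -(aeval Hop ((f.comp (X + C ((m' + 1 : ℕ) : ℂ))) - f) * (Gop R) ^ (m' + 1 + k)) := by
        rw [← mul_assoc, Gpow_comm_aevalH, map_sub]
        rw [sub_mul, neg_sub, mul_assoc, mul_assoc, ← pow_add, ← pow_add]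
        ring_nf
      rw [key]
      apply Submodule.neg_mem
      apply Submodule.subset_span
      refine ⟨_, m' + 1 + k, natDegree_comp_sub hfe he, by omega, ?_, rfl⟩
      have := Finset.mem_range.mp hm
      omega
  | zero => simpa using Submodule.zero_mem _
  | add x y hx hy ihx ihy =>
    have : (x + y) * aeval (Gop R) q - aeval (Gop R) q * (x + y)
        = (x * aeval (Gop R) q - aeval (Gop R) q * x)
          + (y * aeval (Gop R) q - aeval (Gop R) q * y) := by noncomm_ring
    rw [this]; exact Submodule.add_mem _ ihx ihy
  | smul a x hx ihx =>
    have : (a • x) * aeval (Gop R) q - aeval (Gop R) q * (a • x)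
        = a • (x * aeval (Gop R) q - aeval (Gop R) q * x) := by
      rw [smul_mul_assoc, mul_smul_comm, smul_sub]
    rw [this]; exact Submodule.smul_mem _ _ ihx

lemma Gpow_comm_A (R q : Polynomial ℂ) (k : ℕ) :
    (Gop R) ^ k * aeval (Gop R) q = aeval (Gop R) q * (Gop R) ^ k := by
  have h : (Gop R) ^ k = aeval (Gop R) ((X : Polynomial ℂ) ^ k) := by rw [map_pow, aeval_X]
  rw [h, ← map_mul, ← map_mul, mul_comm]

lemma Mspan_comm_zero (R q : Polynomial ℂ) {s t : ℕ} {T : E} (hT : T ∈ Mspan R 0 s t) :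
    T * aeval (Gop R) q = aeval (Gop R) q * T := by
  induction hT using Submodule.span_induction with
  | mem x hx =>
    obtain ⟨f, k, hfe, hsk, hkt, rfl⟩ := hx
    obtain ⟨c, hc⟩ := Polynomial.natDegree_eq_zero.mp (Nat.le_zero.mp hfe)
    have hc2 : (algebraMap ℂ E) c * aeval (Gop R) q = aeval (Gop R) q * algebraMap ℂ E c :=
      Algebra.commutes c _
    rw [← hc, aeval_C, mul_assoc, Gpow_comm_A, ← mul_assoc, hc2, mul_assoc]
  | zero => simp
  | add x y hx hy ihx ihy => rw [add_mul, mul_add, ihx, ihy]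
  | smul a x hx ihx => rw [smul_mul_assoc, mul_smul_comm, ihx]
def Bop (R q : Polynomial ℂ) : ℕ → E
  | 0 => Yop
  | r + 1 => Bop R q r * aeval (Gop R) q - aeval (Gop R) q * Bop R q r

lemma Bop_mem (R q : Polynomial ℂ) {d l : ℕ} (hR : R.natDegree = d)
    (hq0 : q.coeff 0 = 0) (hql : q.natDegree = l) (hl : 1 ≤ l) :
    ∀ r, 1 ≤ r → r ≤ d + 1 → Bop R q r ∈ Mspan R (d + 1 - r) (r - 1) (r * l) := by
  intro r
  induction r with
  | zero => omega
  | succ r' ih =>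
    intro _ hr
    cases Nat.eq_zero_or_pos r' with
    | inl h0 =>
      subst h0
      have := Bone_mem R q hql hl
      rw [hR] at this
      simpa [Bop] using this
    | inr hpos =>
      have hstep := Mspan_comm_step R q hq0 hql (e := d + 1 - r')
        (by omega) (ih hpos (by omega))
      show Bop R q r' * aeval (Gop R) q - aeval (Gop R) q * Bop R q r'
        ∈ Mspan R (d + 1 - (r' + 1)) (r' + 1 - 1) ((r' + 1) * l)
      have h1 : d + 1 - r' - 1 = d + 1 - (r' + 1) := by omega
      have h2 : r' - 1 + 1 = r' + 1 - 1 := by omega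
      have h3 : r' * l + l = (r' + 1) * l := by ring
      rw [h1, h2, h3] at hstep
      exact hstep

lemma Bop_eventually_zero (R q : Polynomial ℂ) {d l : ℕ} (hR : R.natDegree = d)
    (hq0 : q.coeff 0 = 0) (hql : q.natDegree = l) (hl : 1 ≤ l) :
    ∀ r, d + 2 ≤ r → Bop R q r = 0 := by
  have base : Bop R q (d + 2) = 0 := by
    have hmem := Bop_mem R q hR hq0 hql hl (d + 1) (by omega) (by omega)
    have h0 : d + 1 - (d + 1) = 0 := by omega
    rw [h0] at hmem
    show Bop R q (d + 1) * aeval (Gop R) q - aeval (Gop R) q * Bop R q (d + 1) = 0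
    rw [Mspan_comm_zero R q hmem, sub_self]
  intro r hr
  obtain ⟨j, rfl⟩ : ∃ j, r = d + 2 + j := ⟨r - (d + 2), by omega⟩
  clear hr
  induction j with
  | zero => exact base
  | succ j ihj =>
    show Bop R q (d + 2 + j) * aeval (Gop R) q - aeval (Gop R) q * Bop R q (d + 2 + j) = 0
    rw [ihj, zero_mul, mul_zero, sub_self]

-- degree lowering
lemma Hop_mem_degreeLT {m : ℕ} {p : Polynomial ℂ} (hp : p ∈ degreeLT ℂ m) :
    Hop p ∈ degreeLT ℂ m := by
  rw [mem_degreeLT] at *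
  have hHp : Hop p = (X : Polynomial ℂ) * derivative p := rfl
  rw [hHp]
  show degree ((X : Polynomial ℂ) * derivative p) < m
  by_cases h0 : derivative p = 0
  · rw [h0, mul_zero]
    exact lt_of_le_of_lt bot_le hp
  have hp0 : p ≠ 0 := fun h => h0 (by simp [h])
  have h1 : degree ((X : Polynomial ℂ) * derivative p) = 1 + degree (derivative p) := by
    rw [degree_mul, degree_X]
  rw [h1]
  have h2 : degree (derivative p) < degree p := degree_derivative_lt hp0
  rw [degree_eq_natDegree h0, degree_eq_natDegree hp0] at h2
  rw [degree_eq_natDegree h0]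
  rw [degree_eq_natDegree hp0] at hp
  have h2' : (derivative p).natDegree < p.natDegree := by exact_mod_cast h2
  have hm : (p.natDegree : WithBot ℕ) < (m : WithBot ℕ) := hp
  have hm' : p.natDegree < m := by exact_mod_cast hm
  have : ((1 : ℕ) + (derivative p).natDegree : ℕ) < m := by omega
  exact_mod_cast this

lemma aevalH_mem_degreeLT (f : Polynomial ℂ) {m : ℕ} {p : Polynomial ℂ}
    (hp : p ∈ degreeLT ℂ m) : aeval Hop f p ∈ degreeLT ℂ m := by
  have hpow : ∀ i : ℕ, (Hop ^ i) p ∈ degreeLT ℂ m := by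
    intro i
    induction i with
    | zero => simpa using hp
    | succ i ih => rw [pow_succ', Module.End.mul_apply]; exact Hop_mem_degreeLT ih
  rw [aeval_eq_sum_range (R := ℂ) Hop]
  simp only [LinearMap.sum_apply, LinearMap.smul_apply]
  exact Submodule.sum_mem _ fun i _ => Submodule.smul_mem _ _ (hpow i)

lemma Zop_mem_degreeLT {m : ℕ} {p : Polynomial ℂ} (hp : p ∈ degreeLT ℂ m) :
    Zop p ∈ degreeLT ℂ (m - 1) := by
  rw [mem_degreeLT] at *
  show degree (derivative p) < _
  by_cases h0 : derivative p = 0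
  · rw [h0, degree_zero]; exact bot_lt_iff_ne_bot.mpr (by simp)
  have hp0 : p ≠ 0 := fun h => h0 (by simp [h])
  have h2 : degree (derivative p) < degree p := degree_derivative_lt hp0
  rw [degree_eq_natDegree h0, degree_eq_natDegree hp0] at h2
  rw [degree_eq_natDegree hp0] at hp
  rw [degree_eq_natDegree h0]
  have h2' : (derivative p).natDegree < p.natDegree := by exact_mod_cast h2
  have hm' : p.natDegree < m := by exact_mod_cast hp
  have : (derivative p).natDegree < m - 1 := by omega
  exact_mod_cast this

lemma Gop_mem_degreeLT (R : Polynomial ℂ) {m : ℕ} {p : Polynomial ℂ}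
    (hp : p ∈ degreeLT ℂ m) : Gop R p ∈ degreeLT ℂ (m - 1) := by
  show aeval Hop R (Zop p) ∈ _
  exact aevalH_mem_degreeLT R (Zop_mem_degreeLT hp)

lemma aevalG_mem_degreeLT (R f : Polynomial ℂ) {m : ℕ} {p : Polynomial ℂ}
    (hp : p ∈ degreeLT ℂ m) : aeval (Gop R) f p ∈ degreeLT ℂ m := by
  have hpow : ∀ i : ℕ, ((Gop R) ^ i) p ∈ degreeLT ℂ m := by
    intro i
    induction i with
    | zero => simpa using hp
    | succ i ih =>
      rw [pow_succ', Module.End.mul_apply]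
      exact degreeLT_mono (Nat.sub_le m 1) (Gop_mem_degreeLT R ih)
  rw [aeval_eq_sum_range (R := ℂ) (Gop R)]
  simp only [LinearMap.sum_apply, LinearMap.smul_apply]
  exact Submodule.sum_mem _ fun i _ => Submodule.smul_mem _ _ (hpow i)

lemma A_mem_degreeLT (R : Polynomial ℂ) {q : Polynomial ℂ} (hq0 : q.coeff 0 = 0) {m : ℕ}
    {p : Polynomial ℂ} (hp : p ∈ degreeLT ℂ m) :
    aeval (Gop R) q p ∈ degreeLT ℂ (m - 1) := by
  have h := Polynomial.X_mul_divX_add q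
  rw [hq0, map_zero, add_zero] at h
  have hq : q.divX * X = q := by rw [mul_comm]; exact h
  have hA : aeval (Gop R) q = aeval (Gop R) q.divX * Gop R := by
    conv_lhs => rw [← hq]
    rw [map_mul, aeval_X]
  rw [hA, Module.End.mul_apply]
  exact aevalG_mem_degreeLT R q.divX (Gop_mem_degreeLT R hp)

lemma Apow_X_zero (R : Polynomial ℂ) {q : Polynomial ℂ} (hq0 : q.coeff 0 = 0) {j m : ℕ}
    (hm : m < j) : ((aeval (Gop R) q) ^ j) (X ^ m : Polynomial ℂ) = 0 := by
  have key : ∀ (j : ℕ) (p : Polynomial ℂ) (N : ℕ), p ∈ degreeLT ℂ N →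
      ((aeval (Gop R) q) ^ j) p ∈ degreeLT ℂ (N - j) := by
    intro j
    induction j with
    | zero => intro p N hp; simpa using hp
    | succ j ih =>
      intro p N hp
      rw [pow_succ, Module.End.mul_apply]
      have := ih _ (N - 1) (A_mem_degreeLT R hq0 hp)
      have harith : N - 1 - j = N - (j + 1) := by omega
      rwa [harith] at this
  have h1 : (X ^ m : Polynomial ℂ) ∈ degreeLT ℂ (m + 1) := by
    rw [mem_degreeLT, degree_X_pow]
    exact_mod_cast Nat.lt_succ_self m
  have h2 := key j _ _ h1
  have h3 : m + 1 - j = 0 := by omega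
  rw [h3] at h2
  rw [mem_degreeLT] at h2
  by_contra hne
  have := (Polynomial.zero_le_degree_iff.mpr hne)
  exact absurd (lt_of_le_of_lt this h2) (by simp)
/-- `P_n^q = e^{q(G)}(x^n)`, the exponential series being a finite sum
(all terms with `j > n` vanish). -/
def Pq (R q : Polynomial ℂ) (n : ℕ) : Polynomial ℂ :=
  ∑ j ∈ range (n + 1), (j.factorial : ℂ)⁻¹ • ((aeval (Gop R) q) ^ j) (X ^ n : Polynomial ℂ)

/-- `P_m^q` extended to integer indices by `P_m^q = 0` for `m < 0`. -/
def Pqz (R q : Polynomial ℂ) (m : ℤ) : Polynomial ℂ :=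
  if m < 0 then 0 else Pq R q m.toNat

def eopN (R q : Polynomial ℂ) (N : ℕ) : E :=
  ∑ j ∈ range N, ((j.factorial : ℂ))⁻¹ • (aeval (Gop R) q) ^ j

lemma eopN_X (R : Polynomial ℂ) {q : Polynomial ℂ} (hq0 : q.coeff 0 = 0) {N m : ℕ}
    (h : m < N) : (eopN R q N) (X ^ m : Polynomial ℂ) = Pq R q m := by
  rw [eopN, Pq]
  simp only [LinearMap.sum_apply, LinearMap.smul_apply]
  rw [← Finset.sum_range_add_sum_Ico _ (show m + 1 ≤ N by omega)]
  have hz : ∑ j ∈ Finset.Ico (m + 1) N,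
      ((j.factorial : ℂ))⁻¹ • ((aeval (Gop R) q) ^ j) (X ^ m : Polynomial ℂ) = 0 := by
    apply Finset.sum_eq_zero
    intro j hj
    rw [Apow_X_zero R hq0 (Finset.mem_Ico.mp hj).1, smul_zero]
  rw [hz, add_zero]

lemma tri_sum {M : Type*} [AddCommMonoid M] (N : ℕ) (f : ℕ → ℕ → M) :
    ∑ j ∈ range N, ∑ r ∈ range (j + 1), f j r
      = ∑ r ∈ range N, ∑ i ∈ range (N - r), f (i + r) r := by
  induction N with
  | zero => simp
  | succ N ih =>
    have h1 : ∑ r ∈ range N, ∑ i ∈ range (N + 1 - r), f (i + r) r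
        = ∑ r ∈ range N, (∑ i ∈ range (N - r), f (i + r) r + f N r) := by
      apply Finset.sum_congr rfl
      intro r hr
      have hrN : r < N := Finset.mem_range.mp hr
      have hh : N + 1 - r = (N - r) + 1 := by omega
      rw [hh, Finset.sum_range_succ]
      congr 2
      omega
    have hRHS : ∑ r ∈ range (N + 1), ∑ i ∈ range (N + 1 - r), f (i + r) r
        = (∑ r ∈ range N, ∑ i ∈ range (N - r), f (i + r) r) + ∑ r ∈ range (N + 1), f N r := by
      rw [Finset.sum_range_succ (fun r => ∑ i ∈ range (N + 1 - r), f (i + r) r), h1,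
        Finset.sum_add_distrib]
      have h2 : N + 1 - N = 1 := by omega
      rw [h2, Finset.sum_range_one, Finset.sum_range_succ (fun r => f N r)]
      have h3 : (0 : ℕ) + N = N := by omega
      rw [h3, add_assoc]
    rw [Finset.sum_range_succ, ih, hRHS]

lemma Bop_succ_eq (R q : Polynomial ℂ) (r : ℕ) :
    Bop R q r * aeval (Gop R) q
      = aeval (Gop R) q * Bop R q r + Bop R q (r + 1) := by
  show _ = _ + (Bop R q r * aeval (Gop R) q - aeval (Gop R) q * Bop R q r)
  abel

lemma Y_mul_Apow (R q : Polynomial ℂ) (j : ℕ) :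
    Yop * (aeval (Gop R) q) ^ j
      = ∑ r ∈ range (j + 1),
          (j.choose r : ℂ) • ((aeval (Gop R) q) ^ (j - r) * Bop R q r) := by
  induction j with
  | zero => simp [Bop]
  | succ j ih =>
    rw [pow_succ, ← mul_assoc, ih, Finset.sum_mul]
    have hL : ∑ r ∈ range (j + 1),
        ((j.choose r : ℂ) • ((aeval (Gop R) q) ^ (j - r) * Bop R q r)) * aeval (Gop R) q
        = (∑ r ∈ range (j + 1),
            (j.choose r : ℂ) • ((aeval (Gop R) q) ^ (j - r + 1) * Bop R q r))
          + ∑ r ∈ range (j + 1),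
            (j.choose r : ℂ) • ((aeval (Gop R) q) ^ (j - r) * Bop R q (r + 1)) := by
      rw [← Finset.sum_add_distrib]
      apply Finset.sum_congr rfl
      intro r hr
      rw [smul_mul_assoc, mul_assoc, Bop_succ_eq, mul_add, ← mul_assoc, ← pow_succ,
        smul_add]
    rw [hL]
    -- RHS
    rw [Finset.sum_range_succ' (fun r => ((j+1).choose r : ℂ)
      • ((aeval (Gop R) q) ^ (j + 1 - r) * Bop R q r))]
    have hR : ∑ r ∈ range (j + 1), (((j+1).choose (r+1) : ℕ) : ℂ)
        • ((aeval (Gop R) q) ^ (j + 1 - (r + 1)) * Bop R q (r + 1))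
        = (∑ r ∈ range (j + 1),
            (j.choose (r + 1) : ℂ) • ((aeval (Gop R) q) ^ (j - r) * Bop R q (r + 1)))
          + ∑ r ∈ range (j + 1),
            (j.choose r : ℂ) • ((aeval (Gop R) q) ^ (j - r) * Bop R q (r + 1)) := by
      rw [← Finset.sum_add_distrib]
      apply Finset.sum_congr rfl
      intro r hr
      have h3 : j + 1 - (r + 1) = j - r := by omega
      rw [h3, Nat.choose_succ_succ, Nat.cast_add, add_smul, add_comm]
    rw [hR]
    -- match the two pieces
    have hfirst : ∑ r ∈ range (j + 1),
        (j.choose r : ℂ) • ((aeval (Gop R) q) ^ (j - r + 1) * Bop R q r)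
        = ((((j+1).choose 0 : ℕ) : ℂ) • ((aeval (Gop R) q) ^ (j + 1 - 0) * Bop R q 0))
          + ∑ r ∈ range (j + 1),
            (j.choose (r + 1) : ℂ) • ((aeval (Gop R) q) ^ (j - r) * Bop R q (r + 1)) := by
      have hz : (j.choose (j + 1) : ℂ) = 0 := by
        rw [Nat.choose_eq_zero_of_lt (by omega)]; norm_num
      rw [Finset.sum_range_succ'
        (fun r => (j.choose r : ℂ) • ((aeval (Gop R) q) ^ (j - r + 1) * Bop R q r)),
        Finset.sum_range_succ
          (fun r => (j.choose (r + 1) : ℂ) • ((aeval (Gop R) q) ^ (j - r) * Bop R q (r + 1))),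
        hz, zero_smul, add_zero]
      simp only [Nat.choose_zero_right, Nat.cast_one, one_smul, Nat.sub_zero]
      rw [add_comm]
      congr 1
      apply Finset.sum_congr rfl
      intro r hr
      have hrj : r < j := Finset.mem_range.mp hr
      have h4 : j - (r + 1) + 1 = j - r := by omega
      rw [h4]
    rw [hfirst]
    abel
lemma Y_mul_eopN (R q : Polynomial ℂ) (N : ℕ) :
    Yop * eopN R q N
      = ∑ r ∈ range N, ((r.factorial : ℂ))⁻¹ • (eopN R q (N - r) * Bop R q r) := by
  rw [eopN, Finset.mul_sum]
  simp only [mul_smul_comm, Y_mul_Apow, Finset.smul_sum]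
  rw [tri_sum N (fun j r => (j.factorial : ℂ)⁻¹
    • ((j.choose r : ℂ) • ((aeval (Gop R) q) ^ (j - r) * Bop R q r)))]
  apply Finset.sum_congr rfl
  intro r hr
  rw [eopN, Finset.sum_mul, Finset.smul_sum]
  apply Finset.sum_congr rfl
  intro i hi
  have h1 : i + r - r = i := by omega
  have key : ((i + r).factorial : ℂ)⁻¹ * ((i + r).choose r : ℂ)
      = (r.factorial : ℂ)⁻¹ * (i.factorial : ℂ)⁻¹ := by
    have hc := Nat.choose_mul_factorial_mul_factorial (show r ≤ i + r by omega)
    have : ((i + r).choose r : ℂ) * (r.factorial : ℂ) * ((i + r - r).factorial : ℂ)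
        = ((i + r).factorial : ℂ) := by exact_mod_cast congrArg (Nat.cast : ℕ → ℂ) hc
    rw [h1] at this
    have hrf : (r.factorial : ℂ) ≠ 0 := Nat.cast_ne_zero.mpr (Nat.factorial_ne_zero r)
    have hif : (i.factorial : ℂ) ≠ 0 := Nat.cast_ne_zero.mpr (Nat.factorial_ne_zero i)
    have hirf : ((i + r).factorial : ℂ) ≠ 0 := Nat.cast_ne_zero.mpr (Nat.factorial_ne_zero _)
    field_simp
    linear_combination this
  rw [smul_smul, smul_mul_assoc, smul_smul, h1, key]
lemma Bop_apply_mem (R q : Polynomial ℂ) {d l : ℕ} (hR : R.natDegree = d)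
    (hq0 : q.coeff 0 = 0) (hql : q.natDegree = l) (hl : 1 ≤ l) (n r : ℕ) (hr : 1 ≤ r) :
    Bop R q r (X ^ n : Polynomial ℂ) ∈ Submodule.span ℂ
      {p : Polynomial ℂ | ∃ k : ℕ, r - 1 ≤ k ∧ k < l * d + l ∧ k ≤ n ∧ p = X ^ (n - k)} := by
  by_cases hrd : r ≤ d + 1
  · have hmem := Bop_mem R q hR hq0 hql hl r hr hrd
    have hgen : ∀ T : E, T ∈ Mspan R (d + 1 - r) (r - 1) (r * l) →
        T (X ^ n : Polynomial ℂ) ∈ Submodule.span ℂ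
          {p : Polynomial ℂ |
            ∃ k : ℕ, r - 1 ≤ k ∧ k < l * d + l ∧ k ≤ n ∧ p = X ^ (n - k)} := by
      intro T hT
      induction hT using Submodule.span_induction with
      | mem T hT =>
        obtain ⟨f, k, hfe, hsk, hkt, rfl⟩ := hT
        rw [Module.End.mul_apply, Gpow_monomial]
        by_cases hkn : k ≤ n
        · rw [map_smul, aevalH_monomial]
          apply Submodule.smul_mem
          apply Submodule.smul_mem
          apply Submodule.subset_span
          refine ⟨k, hsk, ?_, hkn, rfl⟩
          calc k < r * l := hkt
            _ ≤ (d + 1) * l := Nat.mul_le_mul_right l hrd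
            _ = l * d + l := by ring
        · have : (∏ i ∈ range k, gc R (n - i)) = 0 := by
            apply Finset.prod_eq_zero (Finset.mem_range.2 (show n < k by omega))
            simp [gc]
          rw [this, zero_smul, map_zero]
          exact Submodule.zero_mem _
      | zero => simp
      | add x y hx hy ihx ihy =>
        rw [LinearMap.add_apply]
        exact Submodule.add_mem _ ihx ihy
      | smul a x hx ihx =>
        rw [LinearMap.smul_apply]
        exact Submodule.smul_mem _ _ ihx
    exact hgen _ hmem
  · rw [Bop_eventually_zero R q hR hq0 hql hl r (by omega)]
    simp

/-- Finite-term recurrence: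
`x·P_n^q = P_{n+1}^q + Σ_{j=0}^{ld+l−1} γ_j(n)·P_{n−j}^q` for constants `γ_j(n)`. -/
theorem Pq_recurrence (R : Polynomial ℂ) (d : ℕ) (hR : R.natDegree = d)
    (q : Polynomial ℂ) (hq0 : q.eval 0 = 0) (l : ℕ) (hl : 1 ≤ l)
    (hql : q.natDegree = l) (n : ℕ) :
    ∃ γ : ℕ → ℂ,
      X * Pqz R q n = Pqz R q (n + 1)
        + ∑ j ∈ range (l * d + l), γ j • Pqz R q ((n : ℤ) - j) := by
  have hq0' : q.coeff 0 = 0 := by rwa [coeff_zero_eq_eval_zero]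
  set K := l * d + l with hK
  set v : Fin K → Polynomial ℂ := fun k => Pqz R q ((n : ℤ) - (k : ℕ)) with hv
  -- the key operator identity applied to X^n
  have main := DFunLike.congr_fun (Y_mul_eopN R q (n + 2)) (X ^ n : Polynomial ℂ)
  rw [Module.End.mul_apply, eopN_X R hq0' (by omega)] at main
  simp only [LinearMap.sum_apply, LinearMap.smul_apply, Module.End.mul_apply] at main
  rw [Finset.range_eq_Ico, Finset.sum_eq_sum_Ico_succ_bot (by omega)] at main
  have hterm0 : (Nat.factorial 0 : ℂ)⁻¹ •
      (eopN R q (n + 2 - 0)) (Bop R q 0 (X ^ n : Polynomial ℂ)) = Pq R q (n + 1) := by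
    show (Nat.factorial 0 : ℂ)⁻¹ • (eopN R q (n + 2 - 0)) (Yop (X ^ n : Polynomial ℂ)) = _
    rw [Yop_apply, ← pow_succ']
    rw [show n + 2 - 0 = n + 2 from rfl, eopN_X R hq0' (by omega)]
    norm_num
  rw [hterm0] at main
  -- membership of the remainder sum
  have hmem : ∑ r ∈ Finset.Ico 1 (n + 2), (Nat.factorial r : ℂ)⁻¹ •
      (eopN R q (n + 2 - r)) (Bop R q r (X ^ n : Polynomial ℂ))
      ∈ Submodule.span ℂ (Set.range v) := by
    apply Submodule.sum_mem
    intro r hrI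
    obtain ⟨hr1, hr2⟩ := Finset.mem_Ico.mp hrI
    apply Submodule.smul_mem
    have hB := Bop_apply_mem R q hR hq0' hql hl n r hr1
    have hgen2 : ∀ p : Polynomial ℂ, p ∈ Submodule.span ℂ
        {p : Polynomial ℂ | ∃ k : ℕ, r - 1 ≤ k ∧ k < l * d + l ∧ k ≤ n ∧ p = X ^ (n - k)} →
        (eopN R q (n + 2 - r)) p ∈ Submodule.span ℂ (Set.range v) := by
      intro p hp
      induction hp using Submodule.span_induction with
      | mem p hp =>
        obtain ⟨k, hk1, hk2, hk3, rfl⟩ := hp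
        rw [eopN_X R hq0' (show n - k < n + 2 - r by omega)]
        apply Submodule.subset_span
        refine ⟨⟨k, hk2⟩, ?_⟩
        rw [hv]
        simp only
        rw [Pqz, if_neg (by omega)]
        congr 1
        omega
      | zero => simp
      | add x y hx hy ihx ihy => rw [map_add]; exact Submodule.add_mem _ ihx ihy
      | smul a x hx ihx => rw [map_smul]; exact Submodule.smul_mem _ _ ihx
    exact hgen2 _ hB
  rw [Submodule.mem_span_range_iff_exists_fun] at hmem
  obtain ⟨c, hc⟩ := hmem
  refine ⟨fun j => if h : j < K then c ⟨j, h⟩ else 0, ?_⟩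
  have e1 : Pqz R q (n : ℤ) = Pq R q n := by
    rw [Pqz, if_neg (by omega)]
    congr 1
  have e2 : Pqz R q ((n : ℤ) + 1) = Pq R q (n + 1) := by
    rw [Pqz, if_neg (by omega)]
    congr 1
  have e3 : ∑ j ∈ range K, (if h : j < K then c ⟨j, h⟩ else 0) • Pqz R q ((n : ℤ) - j)
      = ∑ i : Fin K, c i • v i := by
    rw [← Fin.sum_univ_eq_sum_range
      (fun j => (if h : j < K then c ⟨j, h⟩ else 0) • Pqz R q ((n : ℤ) - j)) K]
    apply Finset.sum_congr rfl
    intro i _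
    rw [dif_pos i.isLt]
  rw [Yop_apply] at main
  rw [e1, e2, e3, hc]
  exact main

end
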